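/- arXiv:1409.0494 — 4 statements merged into one kernel-verified Lean document; each statement's English description precedes it below -/
import Mathlib

section
/- For all t > 0, the exponential integral satisfies (1/2)·ln(1 + 2/t) < e^t·E₁(t) < ln(1 + 1/t), where E₁(t) = ∫_t^∞ e^{-u}/u du. -/
open MeasureTheory Real

/-- The exponential integral `E₁ t = ∫_t^∞ e^{-u}/u du`. -/
noncomputable def expIntegralE1 (t : ℝ) : ℝ := ∫ u in Set.Ioi t, Real.exp (-u) / u

open Set Filter

lemma e1aux_integrableOn_of_bound {a C : ℝ} {g : ℝ → ℝ} (hc : ContinuousOn g (Set.Ioi a))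
    (hb : ∀ u ∈ Set.Ioi a, |g u| ≤ C * Real.exp (-u)) : IntegrableOn g (Set.Ioi a) := by
  have hexp : IntegrableOn (fun u : ℝ => C * Real.exp (-u)) (Set.Ioi a) := by
    have := (exp_neg_integrableOn_Ioi a one_pos).const_mul C
    simpa [IntegrableOn] using this
  refine hexp.mono' (hc.aestronglyMeasurable measurableSet_Ioi) ?_
  filter_upwards [ae_restrict_mem measurableSet_Ioi] with u hu
  simpa [Real.norm_eq_abs] using hb u hu

lemma e1aux_cont {a : ℝ} (ha : 0 < a) :
    ContinuousOn (fun u : ℝ => Real.exp (-u) / u) (Set.Ioi a) := by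
  refine ContinuousOn.div ?_ continuousOn_id fun u hu => ?_
  · exact (Real.continuous_exp.comp continuous_neg).continuousOn
  · exact ne_of_gt (lt_trans ha hu)

lemma e1aux_integrableOn {a : ℝ} (ha : 0 < a) :
    IntegrableOn (fun u : ℝ => Real.exp (-u) / u) (Set.Ioi a) := by
  refine e1aux_integrableOn_of_bound (C := 1 / a) (e1aux_cont ha) fun u hu => ?_
  have hu' : a < u := hu
  have hu0 : 0 < u := lt_trans ha hu'
  rw [abs_of_nonneg (by positivity)]
  calc Real.exp (-u) / u ≤ Real.exp (-u) / a := by gcongr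
    _ = 1 / a * Real.exp (-u) := by ring

lemma e1_nonneg {t : ℝ} (ht : 0 < t) : 0 ≤ expIntegralE1 t := by
  refine setIntegral_nonneg measurableSet_Ioi fun u hu => ?_
  have : 0 < u := lt_trans ht hu
  positivity

lemma e1_le {t : ℝ} (ht : 0 < t) : expIntegralE1 t ≤ Real.exp (-t) / t := by
  have h1 : ∫ u in Set.Ioi t, Real.exp (-u) / t = Real.exp (-t) / t := by
    rw [integral_div, integral_exp_neg_Ioi]
  rw [← h1]
  refine setIntegral_mono_on (e1aux_integrableOn ht) ?_ measurableSet_Ioi fun u hu => ?_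
  · have hI : IntegrableOn (fun u : ℝ => Real.exp (-u)) (Set.Ioi t) := by
      simpa using exp_neg_integrableOn_Ioi t one_pos
    exact hI.div_const t
  · have hu' : t < u := hu
    gcongr

lemma e1_tendsto : Tendsto expIntegralE1 atTop (nhds 0) := by
  refine tendsto_of_tendsto_of_tendsto_of_le_of_le' tendsto_const_nhds
    Real.tendsto_exp_neg_atTop_nhds_zero ?_ ?_
  · filter_upwards [eventually_gt_atTop (0:ℝ)] with t ht using e1_nonneg ht
  · filter_upwards [eventually_ge_atTop (1:ℝ)] with t ht
    have ht0 : (0:ℝ) < t := by linarith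
    refine (e1_le ht0).trans ?_
    rw [div_le_iff₀ ht0]
    nlinarith [Real.exp_pos (-t)]

lemma eF_tendsto : Tendsto (fun t => Real.exp t * expIntegralE1 t) atTop (nhds 0) := by
  refine tendsto_of_tendsto_of_tendsto_of_le_of_le' tendsto_const_nhds
    (tendsto_inv_atTop_zero (𝕜 := ℝ)) ?_ ?_
  · filter_upwards [eventually_gt_atTop (0:ℝ)] with t ht
    have := e1_nonneg ht
    positivity
  · filter_upwards [eventually_gt_atTop (0:ℝ)] with t ht
    have h := e1_le ht
    calc Real.exp t * expIntegralE1 t ≤ Real.exp t * (Real.exp (-t) / t) := by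
          gcongr
      _ = t⁻¹ := by rw [Real.exp_neg]; field_simp

lemma hasDerivAt_e1 {t : ℝ} (ht : 0 < t) :
    HasDerivAt expIntegralE1 (-(Real.exp (-t) / t)) t := by
  set c := t / 2 with hc_def
  have hc : 0 < c := by positivity
  have hct : c < t := by simp only [hc_def]; linarith
  have hint := e1aux_integrableOn hc
  have key : ∀ x ∈ Set.Ioi c,
      expIntegralE1 x = expIntegralE1 c - ∫ u in c..x, Real.exp (-u) / u := by
    intro x hx
    have hcx : c ≤ x := le_of_lt hx
    rw [intervalIntegral.integral_of_le hcx]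
    have hsplit : Set.Ioi c = Set.Ioc c x ∪ Set.Ioi x := (Set.Ioc_union_Ioi_eq_Ioi hcx).symm
    have hdisj : Disjoint (Set.Ioc c x) (Set.Ioi x) := Set.Ioc_disjoint_Ioi le_rfl
    unfold expIntegralE1
    rw [show (∫ u in Set.Ioi c, Real.exp (-u) / u)
        = ∫ u in Set.Ioc c x ∪ Set.Ioi x, Real.exp (-u) / u by rw [← hsplit]]
    rw [setIntegral_union hdisj measurableSet_Ioi
      (hint.mono_set Set.Ioc_subset_Ioi_self)
      (hint.mono_set (Set.Ioi_subset_Ioi hcx))]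
    ring
  have hd2 : HasDerivAt (fun x => ∫ u in c..x, Real.exp (-u) / u) (Real.exp (-t) / t) t := by
    refine intervalIntegral.integral_hasDerivAt_right ?_ ?_ ?_
    · rw [intervalIntegrable_iff_integrableOn_Ioc_of_le hct.le]
      exact hint.mono_set Set.Ioc_subset_Ioi_self
    · exact ContinuousOn.stronglyMeasurableAtFilter isOpen_Ioi (e1aux_cont hc) t hct
    · exact (e1aux_cont hc).continuousAt (Ioi_mem_nhds hct)
  have hd3 : HasDerivAt (fun x => expIntegralE1 c - ∫ u in c..x, Real.exp (-u) / u)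
      (-(Real.exp (-t) / t)) t := hd2.const_sub _
  refine hd3.congr_of_eventuallyEq ?_
  filter_upwards [Ioi_mem_nhds hct] with x hx using key x hx

lemma hasDerivAt_exp_neg (x : ℝ) :
    HasDerivAt (fun u : ℝ => Real.exp (-u)) (-Real.exp (-x)) x := by
  simpa [mul_comm, Function.comp_def] using (Real.hasDerivAt_exp (-x)).comp x ((hasDerivAt_id x).neg)

/-- Monotone limit principle: if `h` has negative derivative on `(0,∞)` and tends to `0`
at infinity, then `h` is positive on `(0,∞)`. -/
lemma e1aux_pos_of_deriv_neg {f f' : ℝ → ℝ}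
    (hd : ∀ x, 0 < x → HasDerivAt f (f' x) x) (hneg : ∀ x, 0 < x → f' x < 0)
    (hlim : Tendsto f atTop (nhds 0)) : ∀ t, 0 < t → 0 < f t := by
  have hanti : StrictAntiOn f (Set.Ioi 0) := by
    refine strictAntiOn_of_deriv_neg (convex_Ioi 0)
      (fun x hx => ((hd x hx).continuousAt).continuousWithinAt) fun x hx => ?_
    rw [interior_Ioi] at hx
    rw [(hd x hx).deriv]
    exact hneg x hx
  intro t ht
  have h1 : 0 ≤ f (t + 1) := by
    refine le_of_tendsto hlim ?_
    filter_upwards [eventually_ge_atTop (t + 1)] with x hx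
    rcases eq_or_lt_of_le hx with h | h
    · exact le_of_eq (congrArg f h.symm)
    · exact (hanti (Set.mem_Ioi.mpr (by linarith)) (Set.mem_Ioi.mpr (by linarith)) h).le
  have h2 : f (t + 1) < f t :=
    hanti (Set.mem_Ioi.mpr ht) (Set.mem_Ioi.mpr (by linarith)) (by linarith)
  linarith

/-- Lower auxiliary bound: `E₁ t > e^{-t}/(t+1)`. -/
lemma e1_gt_aux {t : ℝ} (ht : 0 < t) : Real.exp (-t) / (t + 1) < expIntegralE1 t := by
  have key := e1aux_pos_of_deriv_neg
    (f := fun x => expIntegralE1 x - Real.exp (-x) / (x + 1))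
    (f' := fun x => -(Real.exp (-x) / x) -
      ((-Real.exp (-x)) * (x + 1) - Real.exp (-x) * 1) / (x + 1) ^ 2)
    (fun x hx => by
      have h1 : HasDerivAt (fun u : ℝ => Real.exp (-u) / (u + 1))
          (((-Real.exp (-x)) * (x + 1) - Real.exp (-x) * 1) / (x + 1) ^ 2) x :=
        (hasDerivAt_exp_neg x).div ((hasDerivAt_id x).add_const 1) (by positivity)
      exact (hasDerivAt_e1 hx).sub h1)
    (fun x hx => by
      have hx1 : (0:ℝ) < x + 1 := by linarith
      have he : (0:ℝ) < Real.exp (-x) := Real.exp_pos _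
      have : -(Real.exp (-x) / x) -
          ((-Real.exp (-x)) * (x + 1) - Real.exp (-x) * 1) / (x + 1) ^ 2
          = -(Real.exp (-x)) / (x * (x + 1) ^ 2) := by
        field_simp
        ring
      exact lt_of_eq_of_lt this (div_neg_of_neg_of_pos (by linarith) (by positivity)))
    (by
      have h2 : Tendsto (fun x : ℝ => Real.exp (-x) / (x + 1)) atTop (nhds 0) := by
        refine tendsto_of_tendsto_of_tendsto_of_le_of_le' tendsto_const_nhds
          Real.tendsto_exp_neg_atTop_nhds_zero ?_ ?_
        · filter_upwards [eventually_gt_atTop (0:ℝ)] with x hx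
          positivity
        · filter_upwards [eventually_ge_atTop (0:ℝ)] with x hx
          have he : (0:ℝ) < Real.exp (-x) := Real.exp_pos _
          rw [div_le_iff₀ (by linarith)]
          nlinarith
      simpa using e1_tendsto.sub h2)
  have := key t ht
  linarith

/-- Upper auxiliary bound: `E₁ t < e^{-t}(t+1)/(t(t+2))`. -/
lemma e1_lt_aux {t : ℝ} (ht : 0 < t) :
    expIntegralE1 t < Real.exp (-t) * (t + 1) / (t * (t + 2)) := by
  have key := e1aux_pos_of_deriv_neg
    (f := fun x => Real.exp (-x) * (x + 1) / (x * (x + 2)) - expIntegralE1 x)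
    (f' := fun x => (((-Real.exp (-x)) * (x + 1) + Real.exp (-x) * 1) * (x * (x + 2))
        - Real.exp (-x) * (x + 1) * (1 * (x + 2) + x * 1)) / (x * (x + 2)) ^ 2
        - -(Real.exp (-x) / x))
    (fun x hx => by
      have hN : HasDerivAt (fun u : ℝ => Real.exp (-u) * (u + 1))
          ((-Real.exp (-x)) * (x + 1) + Real.exp (-x) * 1) x :=
        (hasDerivAt_exp_neg x).mul ((hasDerivAt_id x).add_const 1)
      have hD : HasDerivAt (fun u : ℝ => u * (u + 2)) (1 * (x + 2) + x * 1) x :=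
        (hasDerivAt_id x).mul ((hasDerivAt_id x).add_const 2)
      have hDiv := hN.div hD (by positivity)
      exact hDiv.sub (hasDerivAt_e1 hx))
    (fun x hx => by
      have he : (0:ℝ) < Real.exp (-x) := Real.exp_pos _
      have hx2 : (0:ℝ) < x + 2 := by linarith
      have : (((-Real.exp (-x)) * (x + 1) + Real.exp (-x) * 1) * (x * (x + 2))
          - Real.exp (-x) * (x + 1) * (1 * (x + 2) + x * 1)) / (x * (x + 2)) ^ 2
          - -(Real.exp (-x) / x)
          = -(2 * Real.exp (-x)) / (x * (x + 2)) ^ 2 := by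
        field_simp
        ring
      exact lt_of_eq_of_lt this (div_neg_of_neg_of_pos (by linarith) (by positivity)))
    (by
      have h2 : Tendsto (fun x : ℝ => Real.exp (-x) * (x + 1) / (x * (x + 2))) atTop (nhds 0) := by
        refine tendsto_of_tendsto_of_tendsto_of_le_of_le' tendsto_const_nhds
          Real.tendsto_exp_neg_atTop_nhds_zero ?_ ?_
        · filter_upwards [eventually_gt_atTop (0:ℝ)] with x hx
          have he : (0:ℝ) < Real.exp (-x) := Real.exp_pos _
          positivity
        · filter_upwards [eventually_ge_atTop (1:ℝ)] with x hx
          have he : (0:ℝ) < Real.exp (-x) := Real.exp_pos _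
          rw [div_le_iff₀ (by nlinarith)]
          gcongr
          nlinarith
      simpa using h2.sub e1_tendsto)
  have := key t ht
  linarith

/-- For all `t > 0`, `(1/2)·ln(1 + 2/t) < eᵗ·E₁(t) < ln(1 + 1/t)`. -/
theorem e1_bounds (t : ℝ) (ht : 0 < t) :
    (1 / 2) * Real.log (1 + 2 / t) < Real.exp t * expIntegralE1 t ∧
      Real.exp t * expIntegralE1 t < Real.log (1 + 1 / t) := by
  constructor
  · -- lower bound
    have key := e1aux_pos_of_deriv_neg
      (f := fun x => Real.exp x * expIntegralE1 x - (1 / 2) * Real.log (1 + 2 / x))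
      (f' := fun x => (Real.exp x * expIntegralE1 x + Real.exp x * (-(Real.exp (-x) / x)))
        - (1 / 2) * ((2 * (-(x ^ 2)⁻¹)) / (1 + 2 / x)))
      (fun x hx => by
        have hF : HasDerivAt (fun y => Real.exp y * expIntegralE1 y)
            (Real.exp x * expIntegralE1 x + Real.exp x * (-(Real.exp (-x) / x))) x :=
          (Real.hasDerivAt_exp x).mul (hasDerivAt_e1 hx)
        have hinner : HasDerivAt (fun y : ℝ => 1 + 2 / y) (2 * (-(x ^ 2)⁻¹)) x := by
          have := ((hasDerivAt_inv (ne_of_gt hx)).const_mul 2).const_add 1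
          simpa [div_eq_mul_inv, mul_comm, mul_neg] using this
        have hlog : HasDerivAt (fun y : ℝ => Real.log (1 + 2 / y))
            ((2 * (-(x ^ 2)⁻¹)) / (1 + 2 / x)) x := by
          refine hinner.log ?_
          have : 0 < 2 / x := by positivity
          linarith
        exact hF.sub (hlog.const_mul (1 / 2)))
      (fun x hx => by
        have hB := e1_lt_aux hx
        have hE : Real.exp x * expIntegralE1 x < (x + 1) / (x * (x + 2)) := by
          have := mul_lt_mul_of_pos_left hB (Real.exp_pos x)
          calc Real.exp x * expIntegralE1 x
              < Real.exp x * (Real.exp (-x) * (x + 1) / (x * (x + 2))) := this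
            _ = (x + 1) / (x * (x + 2)) := by
                rw [Real.exp_neg]
                field_simp
        have hx2 : (0:ℝ) < x + 2 := by linarith
        have heq : (Real.exp x * expIntegralE1 x + Real.exp x * (-(Real.exp (-x) / x)))
            - (1 / 2) * ((2 * (-(x ^ 2)⁻¹)) / (1 + 2 / x))
            = Real.exp x * expIntegralE1 x - (x + 1) / (x * (x + 2)) := by
          rw [Real.exp_neg]
          have hx0 : x ≠ 0 := ne_of_gt hx
          have h12 : (1:ℝ) + 2 / x ≠ 0 := by positivity
          field_simp
          ring
        exact lt_of_eq_of_lt heq (by linarith))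
      (by
        have hlog : Tendsto (fun x : ℝ => (1 / 2) * Real.log (1 + 2 / x)) atTop (nhds 0) := by
          have h1 : Tendsto (fun x : ℝ => 1 + 2 / x) atTop (nhds 1) := by
            have := (tendsto_inv_atTop_zero (𝕜 := ℝ)).const_mul 2
            simpa [div_eq_mul_inv] using tendsto_const_nhds.add this
          have h2 : Tendsto (fun x : ℝ => Real.log (1 + 2 / x)) atTop (nhds 0) := by
            have := (Real.continuousAt_log (by norm_num : (1:ℝ) ≠ 0)).tendsto.comp h1
            simpa [Function.comp_def] using this
          simpa using h2.const_mul (2⁻¹ : ℝ)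
        simpa using eF_tendsto.sub hlog)
    have := key t ht
    linarith
  · -- upper bound
    have key := e1aux_pos_of_deriv_neg
      (f := fun x => Real.log (1 + 1 / x) - Real.exp x * expIntegralE1 x)
      (f' := fun x => (-(x ^ 2)⁻¹) / (1 + 1 / x)
        - (Real.exp x * expIntegralE1 x + Real.exp x * (-(Real.exp (-x) / x))))
      (fun x hx => by
        have hF : HasDerivAt (fun y => Real.exp y * expIntegralE1 y)
            (Real.exp x * expIntegralE1 x + Real.exp x * (-(Real.exp (-x) / x))) x :=
          (Real.hasDerivAt_exp x).mul (hasDerivAt_e1 hx)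
        have hinner : HasDerivAt (fun y : ℝ => 1 + 1 / y) (-(x ^ 2)⁻¹) x := by
          have := (hasDerivAt_inv (ne_of_gt hx)).const_add 1
          simpa [one_div] using this
        have hlog : HasDerivAt (fun y : ℝ => Real.log (1 + 1 / y))
            ((-(x ^ 2)⁻¹) / (1 + 1 / x)) x := by
          refine hinner.log ?_
          have : 0 < 1 / x := by positivity
          linarith
        exact hlog.sub hF)
      (fun x hx => by
        have hB := e1_gt_aux hx
        have hE : (1:ℝ) / (x + 1) < Real.exp x * expIntegralE1 x := by
          have := mul_lt_mul_of_pos_left hB (Real.exp_pos x)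
          calc (1:ℝ) / (x + 1) = Real.exp x * (Real.exp (-x) / (x + 1)) := by
                rw [Real.exp_neg]; field_simp
            _ < Real.exp x * expIntegralE1 x := this
        have hx1 : (0:ℝ) < x + 1 := by linarith
        have heq : (-(x ^ 2)⁻¹) / (1 + 1 / x)
            - (Real.exp x * expIntegralE1 x + Real.exp x * (-(Real.exp (-x) / x)))
            = 1 / (x + 1) - Real.exp x * expIntegralE1 x := by
          rw [Real.exp_neg]
          have hx0 : x ≠ 0 := ne_of_gt hx
          have h11 : (1:ℝ) + 1 / x ≠ 0 := by positivity
          field_simp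
          ring
        exact lt_of_eq_of_lt heq (by linarith))
      (by
        have hlog : Tendsto (fun x : ℝ => Real.log (1 + 1 / x)) atTop (nhds 0) := by
          have h1 : Tendsto (fun x : ℝ => 1 + 1 / x) atTop (nhds 1) := by
            simpa [one_div] using tendsto_const_nhds.add (tendsto_inv_atTop_zero (𝕜 := ℝ))
          have := (Real.continuousAt_log (by norm_num : (1:ℝ) ≠ 0)).tendsto.comp h1
          simpa [Function.comp_def] using this
        simpa using hlog.sub eF_tendsto)
    have := key t ht
    linarith
end

section
/- Let M* ≥ M_* ≥ 1 be integers, ν ≥ 0 and b > 0 with ν/b ≤ M_*. Consider the minimization of Σ_{i=1}^{M_*} (2i−1+M*−M_*)·α_i over vectors α with 1 ≥ α_1 ≥ α_2 ≥ … ≥ α_{M_*} ≥ 0 subject to Σ_{i=1}^{M_*}(1−α_i) ≤ ν/b. If k ≤ ν/b ≤ k+1 for some integer 0 ≤ k ≤ M_*−1, then the infimum equals Φ_k − Υ_k(ν/b − k), where Φ_k = (M*−k)(M_*−k) and Υ_k = M*+M_*−2k−1, and it is attained at α_i = 1 for i ≤ M_*−k−1, α_{M_*−k} = k+1−ν/b,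 and α_i = 0 for i > M_*−k. -/
open Finset

/-- Objective `Σ_{i=1}^{M_*} (2i−1+M*−M_*) α_i` (0-based indexing). -/
noncomputable def dmtObj (Ms Mm : ℕ) (α : Fin Mm → ℝ) : ℝ :=
  ∑ i : Fin Mm, (2 * ((i : ℕ) : ℝ) + 1 + (Ms : ℝ) - (Mm : ℝ)) * α i

/-- Feasibility: `1 ≥ α_1 ≥ … ≥ α_{M_*} ≥ 0` and `Σ(1−α_i) ≤ ν/b`. -/
def dmtFeasible (Mm : ℕ) (ν b : ℝ) (α : Fin Mm → ℝ) : Prop :=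
  Antitone α ∧ (∀ i, 0 ≤ α i) ∧ (∀ i, α i ≤ 1) ∧
    (∑ i : Fin Mm, (1 - α i)) ≤ ν / b

/-- The optimal point: `α_i = 1` for `i ≤ M_*−k−1`, `α_{M_*−k} = k+1−ν/b`,
    `α_i = 0` otherwise (0-based). -/
noncomputable def dmtOptPoint (Mm k : ℕ) (ν b : ℝ) : Fin Mm → ℝ := fun i =>
  if (i : ℕ) < Mm - k - 1 then 1
  else if (i : ℕ) = Mm - k - 1 then (k : ℝ) + 1 - ν / b
  else 0

lemma dmt_sum_c (A B : ℝ) (n : ℕ) :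
    ∑ i ∈ Finset.range n, (2 * (i : ℝ) + 1 + A - B) = (n : ℝ) ^ 2 + n * (A - B) := by
  induction n with
  | zero => simp
  | succ n ih => rw [Finset.sum_range_succ, ih]; push_cast; ring

lemma dmt_sum_split (F : ℕ → ℝ) (m n : ℕ) (h : m < n) :
    ∑ i ∈ Finset.range n, F i
      = (∑ i ∈ Finset.range m, F i) + F m + ∑ i ∈ Finset.Ico (m + 1) n, F i := by
  rw [← Finset.sum_range_add_sum_Ico F h, Finset.sum_range_succ]

/-- Solution of the DMT linear program: the infimum equals `Φ_k − Υ_k(ν/b − k)`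
    and is attained at the stated point. -/
theorem dmt_linear_program (Ms Mm k : ℕ) (hMm : 1 ≤ Mm) (hMs : Mm ≤ Ms)
    (hk : k ≤ Mm - 1) (ν b : ℝ) (hν : 0 ≤ ν) (hb : 0 < b)
    (hlow : (k : ℝ) ≤ ν / b) (hhigh : ν / b ≤ (k : ℝ) + 1) :
    IsLeast {y : ℝ | ∃ α : Fin Mm → ℝ, dmtFeasible Mm ν b α ∧ y = dmtObj Ms Mm α}
      (((Ms : ℝ) - k) * ((Mm : ℝ) - k) - ((Ms : ℝ) + Mm - 2 * k - 1) * (ν / b - k)) ∧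
    dmtFeasible Mm ν b (dmtOptPoint Mm k ν b) ∧
    dmtObj Ms Mm (dmtOptPoint Mm k ν b) =
      ((Ms : ℝ) - k) * ((Mm : ℝ) - k) - ((Ms : ℝ) + Mm - 2 * k - 1) * (ν / b - k) := by
  set t := ν / b with htdef
  have hkMm : k + 1 ≤ Mm := by omega
  set m := Mm - k - 1 with hmdef
  have hmk : m + (k + 1) = Mm := by omega
  have hmlt : m < Mm := by omega
  have hmR : (m : ℝ) = (Mm : ℝ) - (k : ℝ) - 1 := by
    have := congrArg (Nat.cast : ℕ → ℝ) hmk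
    push_cast at this; linarith
  have hMsR : (Mm : ℝ) ≤ (Ms : ℝ) := by exact_mod_cast hMs
  have hv0 : (0 : ℝ) ≤ (k : ℝ) + 1 - t := by linarith
  have hv1 : (k : ℝ) + 1 - t ≤ 1 := by linarith
  -- the pivot coefficient
  set c : ℝ := (Ms : ℝ) + Mm - 2 * k - 1 with hcdef
  have hc0 : 0 ≤ c := by
    have : (k : ℝ) + 1 ≤ (Mm : ℝ) := by exact_mod_cast hkMm
    rw [hcdef]; linarith
  -- the value of the optimal point at index i is g i
  have hg : ∀ i : Fin Mm, dmtOptPoint Mm k ν b i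
      = (fun n : ℕ => if n < m then (1 : ℝ) else if n = m then (k : ℝ) + 1 - t else 0) (i : ℕ) :=
    fun i => rfl
  -- feasibility of the optimal point
  have hfeas : dmtFeasible Mm ν b (dmtOptPoint Mm k ν b) := by
    refine ⟨?_, ?_, ?_, ?_⟩
    · intro i j hij
      have hij' : (i : ℕ) ≤ (j : ℕ) := hij
      rw [hg i, hg j]
      simp only
      split_ifs <;> first | linarith | omega
    · intro i
      rw [hg i]; simp only
      split_ifs <;> linarith
    · intro i
      rw [hg i]; simp only
      split_ifs <;> linarith
    · have : (∑ i : Fin Mm, (1 - dmtOptPoint Mm k ν b i))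
          = ∑ i ∈ Finset.range Mm,
              (1 - (if i < m then (1 : ℝ) else if i = m then (k : ℝ) + 1 - t else 0)) := by
        rw [← Fin.sum_univ_eq_sum_range]
        exact Finset.sum_congr rfl fun i _ => by rw [hg i]
      rw [this, dmt_sum_split _ m Mm hmlt]
      have h1 : ∑ i ∈ Finset.range m,
          (1 - (if i < m then (1 : ℝ) else if i = m then (k : ℝ) + 1 - t else 0)) = 0 := by
        apply Finset.sum_eq_zero
        intro i hi
        rw [if_pos (Finset.mem_range.mp hi)]; ring
      have h2 : ∑ i ∈ Finset.Ico (m + 1) Mm,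
          (1 - (if i < m then (1 : ℝ) else if i = m then (k : ℝ) + 1 - t else 0)) = k := by
        have e : ∀ i ∈ Finset.Ico (m + 1) Mm,
            (1 - (if i < m then (1 : ℝ) else if i = m then (k : ℝ) + 1 - t else 0)) = 1 := by
          intro i hi
          have hi' := Finset.mem_Ico.mp hi
          rw [if_neg (by omega), if_neg (by omega)]; ring
        rw [Finset.sum_congr rfl e, Finset.sum_const, Nat.card_Ico]
        have hcard : Mm - (m + 1) = k := by omega
        rw [hcard]; simp
      rw [h1, h2, if_neg (by omega), if_pos rfl]
      linarith
  -- value of the objective at the optimal point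
  have hval : dmtObj Ms Mm (dmtOptPoint Mm k ν b) =
      ((Ms : ℝ) - k) * ((Mm : ℝ) - k) - ((Ms : ℝ) + Mm - 2 * k - 1) * (t - k) := by
    have : dmtObj Ms Mm (dmtOptPoint Mm k ν b)
        = ∑ i ∈ Finset.range Mm, ((2 * (i : ℝ) + 1 + Ms - Mm) *
            (if i < m then (1 : ℝ) else if i = m then (k : ℝ) + 1 - t else 0)) := by
      rw [dmtObj, ← Fin.sum_univ_eq_sum_range]
      exact Finset.sum_congr rfl fun i _ => by rw [hg i]
    rw [this, dmt_sum_split _ m Mm hmlt]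
    have h1 : ∑ i ∈ Finset.range m, ((2 * (i : ℝ) + 1 + Ms - Mm) *
        (if i < m then (1 : ℝ) else if i = m then (k : ℝ) + 1 - t else 0))
        = (m : ℝ) ^ 2 + m * ((Ms : ℝ) - Mm) := by
      rw [← dmt_sum_c ((Ms : ℝ)) ((Mm : ℝ)) m]
      exact Finset.sum_congr rfl fun i hi => by
        rw [if_pos (Finset.mem_range.mp hi)]; ring
    have h2 : ∑ i ∈ Finset.Ico (m + 1) Mm, ((2 * (i : ℝ) + 1 + Ms - Mm) *
        (if i < m then (1 : ℝ) else if i = m then (k : ℝ) + 1 - t else 0)) = 0 := by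
      apply Finset.sum_eq_zero
      intro i hi
      have hi' := Finset.mem_Ico.mp hi
      rw [if_neg (by omega), if_neg (by omega)]; ring
    rw [h1, h2, if_neg (by omega), if_pos rfl, hmR]
    ring
  refine ⟨⟨⟨dmtOptPoint Mm k ν b, hfeas, hval.symm⟩, ?_⟩, hfeas, hval⟩
  -- lower bound
  rintro y ⟨α, ⟨hanti, h0, h1, hsum⟩, rfl⟩
  rw [← htdef] at hsum
  -- pointwise bound
  have hpt : ∀ i : Fin Mm, (2 * ((i : ℕ) : ℝ) + 1 + Ms - Mm) * (1 - α i)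
      ≤ c * (1 - α i) + (if m < (i : ℕ) then (2 * ((i : ℕ) : ℝ) + 1 + Ms - Mm) - c else 0) := by
    intro i
    have hα0 := h0 i
    have hα1 := h1 i
    rcases le_or_gt ((i : ℕ)) m with hle | hgt
    · rw [if_neg (by omega)]
      have : ((i : ℕ) : ℝ) ≤ (m : ℝ) := by exact_mod_cast hle
      nlinarith [hmR]
    · rw [if_pos hgt]
      have : (m : ℝ) + 1 ≤ ((i : ℕ) : ℝ) := by exact_mod_cast hgt
      nlinarith [hmR]
  -- sum of the slack terms
  have hD : (∑ i : Fin Mm, (if m < (i : ℕ) then (2 * ((i : ℕ) : ℝ) + 1 + Ms - Mm) - c else 0))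
      = ((Mm : ℝ) ^ 2 + Mm * ((Ms : ℝ) - Mm))
        - (((m : ℝ) + 1) ^ 2 + ((m : ℝ) + 1) * ((Ms : ℝ) - Mm)) - (k : ℝ) * c := by
    rw [Fin.sum_univ_eq_sum_range
      (fun n : ℕ => if m < n then (2 * (n : ℝ) + 1 + Ms - Mm) - c else 0) Mm]
    rw [dmt_sum_split _ m Mm hmlt]
    have h1 : ∑ i ∈ Finset.range m,
        (if m < i then (2 * (i : ℝ) + 1 + Ms - Mm) - c else 0) = 0 :=
      Finset.sum_eq_zero fun i hi => if_neg (by have := Finset.mem_range.mp hi; omega)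
    have h2 : ∑ i ∈ Finset.Ico (m + 1) Mm,
        (if m < i then (2 * (i : ℝ) + 1 + Ms - Mm) - c else 0)
        = ∑ i ∈ Finset.Ico (m + 1) Mm, ((2 * (i : ℝ) + 1 + Ms - Mm) - c) :=
      Finset.sum_congr rfl fun i hi => if_pos (by have := Finset.mem_Ico.mp hi; omega)
    have h3 : ∑ i ∈ Finset.Ico (m + 1) Mm, ((2 * (i : ℝ) + 1 + Ms - Mm) - c)
        = (∑ i ∈ Finset.Ico (m + 1) Mm, (2 * (i : ℝ) + 1 + Ms - Mm)) - (k : ℝ) * c := by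
      rw [Finset.sum_sub_distrib, Finset.sum_const, Nat.card_Ico]
      have : Mm - (m + 1) = k := by omega
      rw [this]; ring
    have h4 : (∑ i ∈ Finset.range (m + 1), (2 * (i : ℝ) + 1 + Ms - Mm))
        + ∑ i ∈ Finset.Ico (m + 1) Mm, (2 * (i : ℝ) + 1 + Ms - Mm)
        = ∑ i ∈ Finset.range Mm, (2 * (i : ℝ) + 1 + Ms - Mm) :=
      Finset.sum_range_add_sum_Ico _ (by omega)
    rw [h1, h2, h3, if_neg (by omega)]
    have h5 : ∑ i ∈ Finset.Ico (m + 1) Mm, (2 * (i : ℝ) + 1 + Ms - Mm)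
        = ((Mm : ℝ) ^ 2 + Mm * ((Ms : ℝ) - Mm))
          - (((m : ℝ) + 1) ^ 2 + ((m : ℝ) + 1) * ((Ms : ℝ) - Mm)) := by
      have := h4
      rw [dmt_sum_c, dmt_sum_c] at this
      push_cast at this
      linarith
    rw [h5]; ring
  -- sum bound
  have hS : (∑ i : Fin Mm, (2 * ((i : ℕ) : ℝ) + 1 + Ms - Mm) * (1 - α i))
      ≤ c * t + (((Mm : ℝ) ^ 2 + Mm * ((Ms : ℝ) - Mm))
        - (((m : ℝ) + 1) ^ 2 + ((m : ℝ) + 1) * ((Ms : ℝ) - Mm)) - (k : ℝ) * c) := by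
    calc (∑ i : Fin Mm, (2 * ((i : ℕ) : ℝ) + 1 + Ms - Mm) * (1 - α i))
        ≤ ∑ i : Fin Mm, (c * (1 - α i)
            + (if m < (i : ℕ) then (2 * ((i : ℕ) : ℝ) + 1 + Ms - Mm) - c else 0)) :=
          Finset.sum_le_sum fun i _ => hpt i
      _ = c * (∑ i : Fin Mm, (1 - α i))
            + ∑ i : Fin Mm, (if m < (i : ℕ) then (2 * ((i : ℕ) : ℝ) + 1 + Ms - Mm) - c else 0) := by
          rw [Finset.sum_add_distrib, Finset.mul_sum]
      _ ≤ c * t + (((Mm : ℝ) ^ 2 + Mm * ((Ms : ℝ) - Mm))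
            - (((m : ℝ) + 1) ^ 2 + ((m : ℝ) + 1) * ((Ms : ℝ) - Mm)) - (k : ℝ) * c) := by
          rw [hD]
          have := mul_le_mul_of_nonneg_left hsum hc0
          linarith
  -- relate to the objective
  have hObj : (∑ i : Fin Mm, (2 * ((i : ℕ) : ℝ) + 1 + Ms - Mm) * (1 - α i))
      = ((Mm : ℝ) ^ 2 + Mm * ((Ms : ℝ) - Mm)) - dmtObj Ms Mm α := by
    have h6 : (∑ i : Fin Mm, (2 * ((i : ℕ) : ℝ) + 1 + Ms - Mm))
        = (Mm : ℝ) ^ 2 + Mm * ((Ms : ℝ) - Mm) := by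
      rw [Fin.sum_univ_eq_sum_range (fun n : ℕ => 2 * (n : ℝ) + 1 + Ms - Mm) Mm, dmt_sum_c]
    rw [dmtObj, ← h6, ← Finset.sum_sub_distrib]
    exact Finset.sum_congr rfl fun i _ => by ring
  rw [hObj] at hS
  have hfin : ((Ms : ℝ) - k) * ((Mm : ℝ) - k) - ((Ms : ℝ) + Mm - 2 * k - 1) * (t - k)
      = ((Mm : ℝ) ^ 2 + Mm * ((Ms : ℝ) - Mm)) - c * t
        - (((Mm : ℝ) ^ 2 + Mm * ((Ms : ℝ) - Mm))
          - (((m : ℝ) + 1) ^ 2 + ((m : ℝ) + 1) * ((Ms : ℝ) - Mm)) - (k : ℝ) * c) := by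
    rw [hmR, hcdef]; ring
  rw [hfin]
  linarith
end

section
/- Let Φ_k = (M*−k)(M_*−k) and Υ_k = M*+M_*−2k−1 for integers M* ≥ M_* ≥ 1 and 0 ≤ k ≤ M_*−1, and let ν ≥ 0. For b in the interval [(Φ_{k+1}+ν)/(k+1), (Φ_k+ν)/k) (with the right endpoint +∞ when k = 0), the solution r* of the equation b·r = ν + Φ_k − Υ_k(r − k) is r* = (Φ_k + k·Υ_k + ν)/(Υ_k + b), and this r* satisfies k ≤ r* ≤ k+1. -/
/-- For `b ∈ [(Φ_{k+1}+ν)/(k+1), (Φ_k+ν)/k)` (right endpoint `+∞` when `k = 0`),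
    the solution of `b·r = ν + Φ_k − Υ_k(r−k)` is
    `r* = (Φ_k + kΥ_k + ν)/(Υ_k + b)`, and `k ≤ r* ≤ k+1`. -/
theorem crossing_point_formula (Ms Mm k : ℕ) (hMm : 1 ≤ Mm) (hMs : Mm ≤ Ms)
    (hk : k ≤ Mm - 1) (ν b : ℝ) (hν : 0 ≤ ν) (hb : 0 < b)
    (hblow : (((Ms : ℝ) - (k + 1)) * ((Mm : ℝ) - (k + 1)) + ν) / ((k : ℝ) + 1) ≤ b)
    (hbhigh : k = 0 ∨ b < (((Ms : ℝ) - k) * ((Mm : ℝ) - k) + ν) / (k : ℝ)) :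
    let Φ : ℝ := ((Ms : ℝ) - k) * ((Mm : ℝ) - k)
    let Υ : ℝ := (Ms : ℝ) + Mm - 2 * k - 1
    let r : ℝ := (Φ + k * Υ + ν) / (Υ + b)
    b * r = ν + Φ - Υ * (r - k) ∧ (k : ℝ) ≤ r ∧ r ≤ (k : ℝ) + 1 := by
  have hk1 : k + 1 ≤ Mm := by omega
  have hkMm : (k : ℝ) + 1 ≤ (Mm : ℝ) := by exact_mod_cast hk1
  have hkMs : (k : ℝ) + 1 ≤ (Ms : ℝ) := by exact_mod_cast le_trans hk1 hMs
  intro Φ Υ r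
  have hΥ : (1:ℝ) ≤ Υ := by simp only [Υ]; linarith
  have hden : (0:ℝ) < Υ + b := by linarith
  have hden' : Υ + b ≠ 0 := ne_of_gt hden
  have hblow' : ((Ms : ℝ) - (k + 1)) * ((Mm : ℝ) - (k + 1)) + ν ≤ ((k : ℝ) + 1) * b := by
    have hkpos : (0:ℝ) < (k : ℝ) + 1 := by positivity
    calc ((Ms : ℝ) - (k + 1)) * ((Mm : ℝ) - (k + 1)) + ν
        = ((((Ms : ℝ) - (k + 1)) * ((Mm : ℝ) - (k + 1)) + ν) / ((k : ℝ) + 1)) * ((k : ℝ) + 1) := by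
          field_simp
      _ ≤ b * ((k : ℝ) + 1) := by
          exact mul_le_mul_of_nonneg_right hblow (le_of_lt hkpos)
      _ = ((k : ℝ) + 1) * b := by ring
  refine ⟨?_, ?_, ?_⟩
  · show b * ((Φ + k * Υ + ν) / (Υ + b)) = ν + Φ - Υ * ((Φ + k * Υ + ν) / (Υ + b) - k)
    field_simp
    ring
  · rw [le_div_iff₀ hden]
    by_cases hk0 : k = 0
    · subst hk0
      simp only [Nat.cast_zero, Φ]
      nlinarith [hkMs, hkMm]
    · rcases hbhigh with h0 | h
      · exact absurd h0 hk0
      have hkpos : (0:ℝ) < (k : ℝ) := by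
        have : 1 ≤ k := Nat.one_le_iff_ne_zero.mpr hk0
        exact_mod_cast this
      have h' : (k : ℝ) * b < Φ + ν := by
        have := (lt_div_iff₀ hkpos).mp h
        simp only [Φ]; linarith
      nlinarith
  · rw [div_le_iff₀ hden]
    simp only [Φ, Υ]
    nlinarith [hblow']
end

section
/- Let Φ_k = (M*−k)(M_*−k), Υ_k = M*+M_*−2k−1, and for b(k+1) > Φ_{k+1} define η_k = (b(k+1)−Φ_{k+1})/Υ_k and Γ_k = (1−η_k^{L−1})/(1−η_k) (for η_k ≠ 1). Then the quantity (Υ_k+b(1+k))(Υ_k+b(1+k)Γ_k) − b(k+1)Φ_kΓ_k is positive for all b ≥ Φ_{k+1}/(k+1) and all integers L ≥ 2, k ∈ {0,…,M_*−1}. -/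
private lemma bsld_aux (U B P P' e G : ℝ) (hU : 0 < U) (hB : 0 < B)
    (hP : P = P' + U) (heU : e * U = B - P') (he : 0 ≤ e) (hG : 0 ≤ G) :
    0 < (U + B) * (U + B * G) - B * P * G := by
  have key : (U + B) * (U + B * G) - B * P * G = U * (U + B + B * e * G) := by
    rw [hP]; linear_combination (-(B * G)) * heU
  rw [key]
  have h1 : 0 ≤ B * e * G := mul_nonneg (mul_nonneg hB.le he) hG
  nlinarith

/-- Positivity of the BS-LD denominator: with `Φ_k = (M*−k)(M_*−k)`,
    `Υ_k = M*+M_*−2k−1`, `η_k = (b(k+1)−Φ_{k+1})/Υ_k` and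
    `Γ_k = (1−η_k^{L−1})/(1−η_k)` (interpreted as `L−1` when `η_k = 1`), the
    quantity `(Υ_k+b(1+k))(Υ_k+b(1+k)Γ_k) − b(k+1)Φ_kΓ_k` is positive for all
    `b ≥ Φ_{k+1}/(k+1)`, integers `L ≥ 2` and `k ∈ {0,…,M_*−1}`. -/
theorem bsld_denominator_pos (Ms Mm k : ℕ) (hMm : 1 ≤ Mm) (hMs : Mm ≤ Ms)
    (hk : k ≤ Mm - 1) (L : ℕ) (hL : 2 ≤ L) (b : ℝ) (hb : 0 < b)
    (hbound : ((Ms : ℝ) - (k + 1)) * ((Mm : ℝ) - (k + 1)) / ((k : ℝ) + 1) ≤ b) :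
    let Φ : ℝ := ((Ms : ℝ) - k) * ((Mm : ℝ) - k)
    let Φ' : ℝ := ((Ms : ℝ) - (k + 1)) * ((Mm : ℝ) - (k + 1))
    let Υ : ℝ := (Ms : ℝ) + Mm - 2 * k - 1
    let η : ℝ := (b * ((k : ℝ) + 1) - Φ') / Υ
    let Γ : ℝ := if η = 1 then (L : ℝ) - 1 else (1 - η ^ (L - 1)) / (1 - η)
    0 < (Υ + b * (1 + (k : ℝ))) * (Υ + b * (1 + (k : ℝ)) * Γ)
        - b * ((k : ℝ) + 1) * Φ * Γ := by
  intro Φ Φ' Υ η Γ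
  have hkMm : (k : ℝ) + 1 ≤ Mm := by
    have : k + 1 ≤ Mm := by omega
    exact_mod_cast this
  have hMsMm : (Mm : ℝ) ≤ Ms := by exact_mod_cast hMs
  have hΥ : 0 < Υ := by simp only [Υ]; linarith
  have hk1 : (0:ℝ) < (k : ℝ) + 1 := by positivity
  have hnum : 0 ≤ b * ((k : ℝ) + 1) - Φ' := by
    have := (div_le_iff₀ hk1).mp hbound
    simp only [Φ']; linarith
  have hη : 0 ≤ η := div_nonneg hnum hΥ.le
  have hΓ : Γ = ∑ i ∈ Finset.range (L - 1), η ^ i := by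
    by_cases h1 : η = 1
    · simp only [Γ, if_pos h1, h1, one_pow, Finset.sum_const, Finset.card_range,
        smul_eq_mul, mul_one]
      rw [nsmul_eq_mul, mul_one, Nat.cast_sub (by omega : 1 ≤ L), Nat.cast_one]
    · rw [geom_sum_eq h1]
      simp only [Γ, if_neg h1]
      rw [← neg_div_neg_eq]
      ring_nf
  have hΓ0 : 0 ≤ Γ := by
    rw [hΓ]
    exact Finset.sum_nonneg fun i _ => pow_nonneg hη i
  have hηΥ : η * Υ = b * ((k : ℝ) + 1) - Φ' := by
    exact div_mul_cancel₀ _ hΥ.ne'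
  have hΦ : Φ = Φ' + Υ := by simp only [Φ, Φ', Υ]; ring
  have hB : (0:ℝ) < b * ((k : ℝ) + 1) := mul_pos hb hk1
  have := bsld_aux Υ (b * ((k : ℝ) + 1)) Φ Φ' η Γ hΥ hB hΦ hηΥ hη hΓ0
  have hcomm : b * (1 + (k : ℝ)) = b * ((k : ℝ) + 1) := by ring
  rw [hcomm]
  exact this
end
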